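/- Suppose θ ≠ 0. For every ξ ∈ K, the eigenspace {x ∈ K^m : M_m·x = ξ·x} has dimension at most 1 over K. -/

import Mathlib

/-- Suppose `θ ≠ 0`. For every `ξ ∈ K`, the eigenspace `{x ∈ K^m : M_m·x = ξ·x}`
has dimension at most 1 over `K`. -/
theorem stmt_7 (K : Type*) [Field K] (θ : K) (hθ : θ ≠ 0) (m : ℕ) (hm : 1 ≤ m)
    (M : Matrix (Fin m) (Fin m) K)
    (hM : ∀ i j : Fin m, M i j =
      if (i : ℕ) = 0 then (if (j : ℕ) = m - 1 then 1 else 0)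
      else if (j : ℕ) = (i : ℕ) - 1 then θ
      else if (j : ℕ) = m - 1 then 1 - θ else 0)
    (ξ : K) :
    Module.finrank K (Module.End.eigenspace M.mulVecLin ξ) ≤ 1 := by
  have hm1 : m - 1 < m := by omega
  set lst : Fin m := ⟨m - 1, hm1⟩ with hlst
  have key : ∀ x ∈ Module.End.eigenspace M.mulVecLin ξ, x lst = 0 → x = 0 := by
    intro x hx hlast
    rw [Module.End.mem_eigenspace_iff] at hx
    have hx' : ∀ i, ∑ j, M i j * x j = ξ * x i := by
      intro i
      have := congrFun hx i
      simpa [Matrix.mulVecLin_apply, Matrix.mulVec, dotProduct] using this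
    have hterm : ∀ i : Fin m, (∑ j, M i j * x j) =
        if (i : ℕ) = 0 then x lst
        else θ * x ⟨(i : ℕ) - 1, by omega⟩ + (1 - θ) * x lst := by
      intro i
      by_cases hi : (i : ℕ) = 0
      · simp only [hi, if_pos]
        have hcond : ∀ j : Fin m, ((j : ℕ) = m - 1) = (j = lst) := by
          intro j; simp [hlst, Fin.ext_iff]
        calc ∑ j, M i j * x j = ∑ j, (if j = lst then (1:K) else 0) * x j := by
              apply Finset.sum_congr rfl
              intro j _
              rw [hM i j, if_pos hi]
              simp only [hcond]
          _ = x lst := by simp [Finset.sum_ite_eq']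
      · set a : Fin m := ⟨(i : ℕ) - 1, by omega⟩ with ha
        have hane : a ≠ lst := by
          have hilt := i.isLt
          simp only [ha, hlst, ne_eq, Fin.mk.injEq]
          omega
        simp only [hi, if_neg, if_false]
        calc ∑ j, M i j * x j
            = ∑ j, ((if j = a then θ else 0) + (if j = lst then 1 - θ else 0)) * x j := by
              apply Finset.sum_congr rfl
              intro j _
              rw [hM i j, if_neg hi]
              have hja : ((j : ℕ) = (i : ℕ) - 1) = (j = a) := by
                simp [ha, Fin.ext_iff]
              have hjl : ((j : ℕ) = m - 1) = (j = lst) := by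
                simp [hlst, Fin.ext_iff]
              simp only [hja, hjl]
              by_cases h1 : j = a
              · rw [if_pos h1, if_pos h1, if_neg (h1 ▸ hane), add_zero]
              · rw [if_neg h1, if_neg h1, zero_add]
          _ = θ * x a + (1 - θ) * x lst := by
              simp [add_mul, Finset.sum_add_distrib, Finset.sum_ite_eq']
    have heq : ∀ i : Fin m,
        (if (i : ℕ) = 0 then x lst
         else θ * x ⟨(i : ℕ) - 1, by omega⟩ + (1 - θ) * x lst) = ξ * x i := by
      intro i; rw [← hterm i]; exact hx' i
    by_cases hξ : ξ = 0
    · -- backward: θ * x_{i-1} = 0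
      funext k
      by_cases hk : (k : ℕ) = m - 1
      · have : k = lst := by simp [hlst, Fin.ext_iff, hk]
        rw [this]; exact hlast
      · have hk1 : (k : ℕ) + 1 < m := by have := k.isLt; omega
        have := heq ⟨(k : ℕ) + 1, hk1⟩
        simp only [hξ, zero_mul, hlast, mul_zero, add_zero] at this
        have hxk : θ * x ⟨(k : ℕ) + 1 - 1, by omega⟩ = 0 := by
          simpa using this
        have : x ⟨(k : ℕ) + 1 - 1, by omega⟩ = 0 := by
          rcases mul_eq_zero.mp hxk with h | h
          · exact absurd h hθ
          · exact h
        simpa using this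
    · -- forward induction
      have H : ∀ k, ∀ h : k < m, x ⟨k, h⟩ = 0 := by
        intro k
        induction k with
        | zero =>
          intro h
          have := heq ⟨0, h⟩
          simp only [hlast] at this
          have : (0 : K) = ξ * x ⟨0, h⟩ := by simpa using this
          field_simp at this
          exact (mul_eq_zero.mp this.symm).resolve_left hξ
        | succ n ih =>
          intro h
          have hn : n < m := by omega
          have := heq ⟨n + 1, h⟩
          simp only [hlast, mul_zero, add_zero] at this
          have h1 : θ * x ⟨n + 1 - 1, by omega⟩ + 0 = ξ * x ⟨n + 1, h⟩ := by
            simpa using this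
        -- x ⟨n+1-1⟩ = x ⟨n⟩
          have h2 : x ⟨n + 1 - 1, by omega⟩ = x ⟨n, hn⟩ := by congr 1
          rw [h2, ih hn, mul_zero, zero_add] at h1
          exact (mul_eq_zero.mp h1.symm).resolve_left hξ
      funext k
      have := H k k.isLt
      simpa using this
  -- now finrank bound via injective map to K
  let f : (Module.End.eigenspace M.mulVecLin ξ) →ₗ[K] K :=
    (LinearMap.proj lst).comp (Module.End.eigenspace M.mulVecLin ξ).subtype
  have hinj : Function.Injective f := by
    rw [← LinearMap.ker_eq_bot, LinearMap.ker_eq_bot']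
    rintro ⟨x, hx⟩ h0
    have h0' : x lst = 0 := h0
    exact Subtype.ext (key x hx h0')
  calc Module.finrank K (Module.End.eigenspace M.mulVecLin ξ)
      ≤ Module.finrank K K := LinearMap.finrank_le_finrank_of_injective hinj
    _ = 1 := Module.finrank_self K
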